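/- Let C, C₁, C₂, … be Archimedean copulas with (normalized, right-continuous at 0) generators φ, φ₁, φ₂, …, and suppose (φ_n) converges pointwise to φ on (0,1]. Then lim_{n→∞} ζ₁(C_n) = ζ₁(C) and lim_{n→∞} r(C_n) = r(C). In other words, within the class of Archimedean copulas both ζ₁ and r are continuous with respect to pointwise convergence of the generators on (0,1]. -/

import Mathlib

open MeasureTheory Filter Set
open scoped ENNReal

noncomputable section

/-- Right-hand derivative (of a convex function on `[0,1]`) of `f` at `x`, realized as the
infimum of the forward difference quotients with right endpoint in `(x, 1]`. -/
noncomputable def rightD (f : ℝ → ℝ) (x : ℝ) : ℝ :=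
  sInf ((fun y => (f y - f x) / (y - x)) '' Set.Ioc x 1)

/-- `φ : [0,1] → [0,∞]` is a (normalized, right-continuous at `0`) generator of an
Archimedean copula: convex, strictly decreasing, `φ 1 = 0`, finite on `(0,1]`,
right-continuous at `0` and normalized by `φ (1/2) = 1`. -/
structure IsGenerator (φ : ℝ → ℝ≥0∞) : Prop where
  convex : ∀ x ∈ Set.Icc (0:ℝ) 1, ∀ y ∈ Set.Icc (0:ℝ) 1, ∀ t ∈ Set.Icc (0:ℝ) 1,
    φ (t * x + (1 - t) * y) ≤ ENNReal.ofReal t * φ x + ENNReal.ofReal (1 - t) * φ y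
  strict_anti : ∀ x ∈ Set.Icc (0:ℝ) 1, ∀ y ∈ Set.Icc (0:ℝ) 1, x < y → φ y < φ x
  map_one : φ 1 = 0
  finite : ∀ x ∈ Set.Ioc (0:ℝ) 1, φ x < ⊤
  rightCont_zero : Filter.Tendsto φ (nhdsWithin 0 (Set.Ioi 0)) (nhds (φ 0))
  normalized : φ (1/2) = 1

/-- Pseudo-inverse `φ⁻` of a generator: `φ⁻ s = φ⁻¹ s` for `s < φ 0` and `0` for `s ≥ φ 0`. -/
noncomputable def pseudoInv (φ : ℝ → ℝ≥0∞) (s : ℝ≥0∞) : ℝ :=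
  sSup {x | x ∈ Set.Icc (0:ℝ) 1 ∧ s ≤ φ x}

/-- The Archimedean copula generated by `φ`: `C(x,y) = φ⁻(φ x + φ y)`. -/
noncomputable def archCopula (φ : ℝ → ℝ≥0∞) (x y : ℝ) : ℝ :=
  pseudoInv φ (φ x + φ y)

/-- The right-hand derivative `D⁺φ` of a generator. -/
noncomputable def Dplus (φ : ℝ → ℝ≥0∞) (x : ℝ) : ℝ :=
  rightD (fun t => (φ t).toReal) x

/-- The set `Cont(D⁺φ)` of continuity points of `D⁺φ` in `(0,1)`. -/
def ContD (φ : ℝ → ℝ≥0∞) : Set ℝ :=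
  {x | x ∈ Set.Ioo (0:ℝ) 1 ∧ ContinuousAt (Dplus φ) x}

/-- The `t`-level function `f^t(x) = φ⁻(φ t − φ x)` of the Archimedean copula generated
by `φ`. -/
noncomputable def levelFn (φ : ℝ → ℝ≥0∞) (t x : ℝ) : ℝ :=
  pseudoInv φ (φ t - φ x)

/-- The Kendall distribution function `F^Kendall(x) = x − φ(x)/D⁺φ(x)` of the Archimedean
copula generated by `φ`. -/
noncomputable def kendall (φ : ℝ → ℝ≥0∞) (x : ℝ) : ℝ :=
  x - (φ x).toReal / Dplus φ x

/-- The Markov kernel (as conditional distribution function `(x,y) ↦ K_C(x,[0,y])`) of the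
Archimedean copula generated by `φ`. -/
noncomputable def archKernel (φ : ℝ → ℝ≥0∞) (x y : ℝ) : ℝ :=
  if x = 0 ∨ x = 1 then 1
  else if y < levelFn φ 0 x then 0
  else Dplus φ x / Dplus φ (archCopula φ x y)

/-- The metric `D₁` between two copulas, expressed via their conditional distribution
functions `K₁, K₂` (with `Kᵢ x y = K_{Cᵢ}(x,[0,y])`). -/
noncomputable def D1 (K1 K2 : ℝ → ℝ → ℝ) : ℝ :=
  ∫ y in Set.Icc (0:ℝ) 1, ∫ x in Set.Icc (0:ℝ) 1, |K1 x y - K2 x y|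

/-- Conditional distribution function of the independence copula `Π`. -/
def piKernel : ℝ → ℝ → ℝ := fun _ y => y

/-- Dependence measure `ζ₁(C) = 3 D₁(C, Π)`. -/
noncomputable def zeta1 (K : ℝ → ℝ → ℝ) : ℝ := 3 * D1 K piKernel

/-- Dependence measure `r(C) = 6 ∫∫ K_C(x,[0,y])² dλ(x) dλ(y) − 2`. -/
noncomputable def rdep (K : ℝ → ℝ → ℝ) : ℝ :=
  6 * (∫ y in Set.Icc (0:ℝ) 1, ∫ x in Set.Icc (0:ℝ) 1, (K x y) ^ 2) - 2

/-- Weak conditional convergence of a sequence of copulas, in terms of their conditional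
distribution functions: for λ-a.e. `x ∈ [0,1]` the measures `K_{C_n}(x,·)` converge weakly
to `K_C(x,·)`, i.e. the conditional distribution functions converge at every continuity
point of `y ↦ K_C(x,[0,y])` in `[0,1]`. -/
def WeakCondConv (Kseq : ℕ → ℝ → ℝ → ℝ) (K : ℝ → ℝ → ℝ) : Prop :=
  ∀ᵐ x ∂(volume.restrict (Set.Icc (0:ℝ) 1)),
    ∀ y ∈ Set.Icc (0:ℝ) 1, ContinuousWithinAt (fun t => K x t) (Set.Icc 0 1) y →
      Filter.Tendsto (fun n => Kseq n x y) Filter.atTop (nhds (K x y))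

namespace AG

/-- Real-valued version of a generator. -/
noncomputable def F (ψ : ℝ → ℝ≥0∞) : ℝ → ℝ := fun t => (ψ t).toReal

variable {ψ : ℝ → ℝ≥0∞}

lemma anti (h : IsGenerator ψ) {x y : ℝ} (hx : x ∈ Icc (0:ℝ) 1)
    (hy : y ∈ Icc (0:ℝ) 1) (hxy : x ≤ y) : ψ y ≤ ψ x := by
  rcases eq_or_lt_of_le hxy with rfl | h'
  · exact le_rfl
  · exact (h.strict_anti x hx y hy h').le

lemma ne_top (h : IsGenerator ψ) {x : ℝ} (hx : x ∈ Ioc (0:ℝ) 1) : ψ x ≠ ⊤ :=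
  (h.finite x hx).ne

lemma F_nonneg (x : ℝ) : 0 ≤ F ψ x := ENNReal.toReal_nonneg

lemma F_one (h : IsGenerator ψ) : F ψ 1 = 0 := by simp [F, h.map_one]

lemma F_lt (h : IsGenerator ψ) {x y : ℝ} (hx : x ∈ Ioc (0:ℝ) 1)
    (hy : y ∈ Ioc (0:ℝ) 1) (hxy : x < y) : F ψ y < F ψ x := by
  have := h.strict_anti x (Ioc_subset_Icc_self hx) y (Ioc_subset_Icc_self hy) hxy
  exact ENNReal.toReal_lt_toReal (ne_top h hy) (ne_top h hx) |>.mpr this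

lemma F_le (h : IsGenerator ψ) {x y : ℝ} (hx : x ∈ Ioc (0:ℝ) 1)
    (hy : y ∈ Icc (0:ℝ) 1) (hxy : x ≤ y) : F ψ y ≤ F ψ x := by
  have h1 : ψ y ≤ ψ x := anti h (Ioc_subset_Icc_self hx) hy hxy
  exact ENNReal.toReal_le_toReal (by
    intro hcon
    exact ne_top h hx (top_le_iff.mp (hcon ▸ h1))) (ne_top h hx) |>.mpr h1

lemma F_pos (h : IsGenerator ψ) {x : ℝ} (hx : x ∈ Ioo (0:ℝ) 1) : 0 < F ψ x := by
  have := F_lt h ⟨hx.1, hx.2.le⟩ ⟨one_pos, le_rfl⟩ hx.2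
  rw [F_one h] at this; linarith

lemma cvx (h : IsGenerator ψ) : ConvexOn ℝ (Ioc (0:ℝ) 1) (F ψ) := by
  refine ⟨convex_Ioc 0 1, ?_⟩
  intro x hx y hy a b ha hb hab
  have hx' : x ∈ Icc (0:ℝ) 1 := Ioc_subset_Icc_self hx
  have hy' : y ∈ Icc (0:ℝ) 1 := Ioc_subset_Icc_self hy
  have hmem : a • x + b • y ∈ Ioc (0:ℝ) 1 := (convex_Ioc 0 1) hx hy ha hb hab
  have key := h.convex x hx' y hy' a ⟨ha, by linarith⟩
  have hb' : b = 1 - a := by linarith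
  rw [← hb'] at key
  simp only [smul_eq_mul] at hmem ⊢
  have hRHS : ENNReal.ofReal a * ψ x + ENNReal.ofReal b * ψ y ≠ ⊤ := by
    apply ENNReal.add_ne_top.mpr
    constructor <;> exact ENNReal.mul_ne_top ENNReal.ofReal_ne_top (ne_top h (by assumption))
  have := ENNReal.toReal_le_toReal (by
      intro hcon
      exact ne_top h hmem hcon) hRHS |>.mpr key
  calc F ψ (a * x + b * y) ≤ (ENNReal.ofReal a * ψ x + ENNReal.ofReal b * ψ y).toReal := this
    _ = a * F ψ x + b * F ψ y := by
        rw [ENNReal.toReal_add (ENNReal.mul_ne_top ENNReal.ofReal_ne_top (ne_top h hx))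
          (ENNReal.mul_ne_top ENNReal.ofReal_ne_top (ne_top h hy)),
          ENNReal.toReal_mul, ENNReal.toReal_mul, ENNReal.toReal_ofReal ha,
          ENNReal.toReal_ofReal hb]
        rfl

/-- Convexity on the closed interval when `ψ 0` is finite. -/
lemma cvx' (h : IsGenerator ψ) (h0 : ψ 0 ≠ ⊤) : ConvexOn ℝ (Icc (0:ℝ) 1) (F ψ) := by
  have hne : ∀ z ∈ Icc (0:ℝ) 1, ψ z ≠ ⊤ := by
    intro z hz
    rcases eq_or_lt_of_le hz.1 with rfl | h'
    · exact h0
    · exact ne_top h ⟨h', hz.2⟩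
  refine ⟨convex_Icc 0 1, ?_⟩
  intro x hx y hy a b ha hb hab
  have hmem : a • x + b • y ∈ Icc (0:ℝ) 1 := (convex_Icc 0 1) hx hy ha hb hab
  have key := h.convex x hx y hy a ⟨ha, by linarith⟩
  have hb' : b = 1 - a := by linarith
  rw [← hb'] at key
  simp only [smul_eq_mul] at hmem ⊢
  have hRHS : ENNReal.ofReal a * ψ x + ENNReal.ofReal b * ψ y ≠ ⊤ := by
    apply ENNReal.add_ne_top.mpr
    constructor <;> exact ENNReal.mul_ne_top ENNReal.ofReal_ne_top (hne _ (by assumption))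
  have := ENNReal.toReal_le_toReal (fun hcon => hne _ hmem hcon) hRHS |>.mpr key
  calc F ψ (a * x + b * y) ≤ (ENNReal.ofReal a * ψ x + ENNReal.ofReal b * ψ y).toReal := this
    _ = a * F ψ x + b * F ψ y := by
        rw [ENNReal.toReal_add (ENNReal.mul_ne_top ENNReal.ofReal_ne_top (hne _ hx))
          (ENNReal.mul_ne_top ENNReal.ofReal_ne_top (hne _ hy)),
          ENNReal.toReal_mul, ENNReal.toReal_mul, ENNReal.toReal_ofReal ha,
          ENNReal.toReal_ofReal hb]
        rfl

end AG
namespace AG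

variable {ψ : ℝ → ℝ≥0∞}

lemma Dplus_eq (ψ : ℝ → ℝ≥0∞) (x : ℝ) :
    Dplus ψ x = sInf ((fun t => (F ψ t - F ψ x) / (t - x)) '' Ioc x 1) := rfl

lemma slope_adj (h : IsGenerator ψ) {u v w : ℝ} (hu : u ∈ Ioc (0:ℝ) 1)
    (hw : w ∈ Ioc (0:ℝ) 1) (h1 : u < v) (h2 : v < w) :
    (F ψ v - F ψ u) / (v - u) ≤ (F ψ w - F ψ v) / (w - v) :=
  (cvx h).slope_mono_adjacent hu hw h1 h2

lemma image_nonempty {x : ℝ} (hx : x < 1) :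
    ((fun t => (F ψ t - F ψ x) / (t - x)) '' Ioc x 1).Nonempty :=
  ⟨_, ⟨1, ⟨hx, le_rfl⟩, rfl⟩⟩

lemma bddBelow_image (h : IsGenerator ψ) {u x : ℝ} (hu : 0 < u) (hux : u < x) (hx1 : x ≤ 1) :
    BddBelow ((fun t => (F ψ t - F ψ x) / (t - x)) '' Ioc x 1) := by
  refine ⟨(F ψ x - F ψ u) / (x - u), ?_⟩
  rintro _ ⟨t, ht, rfl⟩
  exact slope_adj h ⟨hu, le_trans hux.le hx1⟩ ⟨lt_trans hu (lt_trans hux ht.1), ht.2⟩ hux ht.1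

lemma Dplus_le_slope (h : IsGenerator ψ) {x t : ℝ} (hx : x ∈ Ioo (0:ℝ) 1)
    (ht : t ∈ Ioc x 1) : Dplus ψ x ≤ (F ψ t - F ψ x) / (t - x) := by
  rw [Dplus_eq]
  exact csInf_le (bddBelow_image h (half_pos hx.1) (by linarith [hx.1]) hx.2.le)
    ⟨t, ht, rfl⟩

lemma slope_le_Dplus (h : IsGenerator ψ) {u x : ℝ} (hu : 0 < u) (hux : u < x) (hx1 : x < 1) :
    (F ψ x - F ψ u) / (x - u) ≤ Dplus ψ x := by
  rw [Dplus_eq]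
  refine le_csInf (image_nonempty hx1) ?_
  rintro _ ⟨t, ht, rfl⟩
  exact slope_adj h ⟨hu, by linarith⟩ ⟨by linarith [ht.1], ht.2⟩ hux ht.1

lemma Dplus_mono (h : IsGenerator ψ) {u x : ℝ} (hu : 0 < u) (hux : u ≤ x) (hx1 : x < 1) :
    Dplus ψ u ≤ Dplus ψ x := by
  rcases eq_or_lt_of_le hux with rfl | h'
  · exact le_rfl
  · exact le_trans (Dplus_le_slope h ⟨hu, by linarith⟩ ⟨h', hx1.le⟩) (slope_le_Dplus h hu h' hx1)

lemma Dplus_neg (h : IsGenerator ψ) {x : ℝ} (hx : x ∈ Ioo (0:ℝ) 1) : Dplus ψ x < 0 := by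
  have h1 : Dplus ψ x ≤ (F ψ 1 - F ψ x) / (1 - x) := Dplus_le_slope h hx ⟨hx.2, le_rfl⟩
  have h2 : 0 < F ψ x := F_pos h hx
  have h3 : (F ψ 1 - F ψ x) / (1 - x) < 0 := by
    rw [F_one h]
    apply div_neg_of_neg_of_pos <;> linarith [hx.2]
  linarith

lemma Dplus_le_slope_or (h : IsGenerator ψ) {c t : ℝ} (hc : c ∈ Ico (0:ℝ) 1)
    (ht : t ∈ Ioc c 1) : Dplus ψ c ≤ (F ψ t - F ψ c) / (t - c) ∨ Dplus ψ c = 0 := by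
  by_cases hb : BddBelow ((fun s => (F ψ s - F ψ c) / (s - c)) '' Ioc c 1)
  · exact Or.inl (by rw [Dplus_eq]; exact csInf_le hb ⟨t, ht, rfl⟩)
  · exact Or.inr (by rw [Dplus_eq]; exact Real.sInf_of_not_bddBelow hb)

lemma Dplus_zero_top (h : IsGenerator ψ) (h0 : ψ 0 = ⊤) : Dplus ψ 0 = 0 := by
  have hF0 : F ψ 0 = 0 := by simp [F, h0]
  rw [Dplus_eq]
  apply le_antisymm
  · refine csInf_le ⟨0, ?_⟩ ⟨1, ⟨one_pos, le_rfl⟩, by simp [hF0, F_one h]⟩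
    rintro _ ⟨t, ht, rfl⟩
    rw [hF0]
    apply div_nonneg (by simpa using F_nonneg (ψ := ψ) t) (by linarith [ht.1])
  · refine le_csInf (image_nonempty one_pos) ?_
    rintro _ ⟨t, ht, rfl⟩
    rw [hF0]
    apply div_nonneg (by simpa using F_nonneg (ψ := ψ) t) (by linarith [ht.1])

lemma Dplus_zero_le (h : IsGenerator ψ) (h0 : ψ 0 ≠ ⊤) {x : ℝ} (hx : x ∈ Ioo (0:ℝ) 1) :
    Dplus ψ 0 ≤ Dplus ψ x ∨ Dplus ψ 0 = 0 := by
  rcases Dplus_le_slope_or h ⟨le_rfl, one_pos⟩ (⟨hx.1, hx.2.le⟩ : x ∈ Ioc (0:ℝ) 1) with h1 | h1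
  · left
    refine le_trans (by simpa using h1) ?_
    rw [Dplus_eq]
    refine le_csInf (image_nonempty hx.2) ?_
    rintro _ ⟨t, ht, rfl⟩
    have := (cvx' h h0).slope_mono_adjacent (⟨le_rfl, one_pos.le⟩ : (0:ℝ) ∈ Icc (0:ℝ) 1)
      (⟨by linarith [hx.1, ht.1], ht.2⟩ : t ∈ Icc (0:ℝ) 1) hx.1 ht.1
    simpa using this
  · exact Or.inr h1

lemma F_contAt (h : IsGenerator ψ) {x : ℝ} (hx : x ∈ Ioo (0:ℝ) 1) :
    ContinuousAt (F ψ) x := by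
  have hc : ConvexOn ℝ (Ioo (0:ℝ) 1) (F ψ) :=
    (cvx h).subset Ioo_subset_Ioc_self (convex_Ioo 0 1)
  exact (hc.continuousOn isOpen_Ioo).continuousAt (isOpen_Ioo.mem_nhds hx)

end AG
namespace AG

variable {ψ : ℝ → ℝ≥0∞} {s s1 s2 : ℝ≥0∞}

lemma pI_bddAbove : BddAbove {x | x ∈ Icc (0:ℝ) 1 ∧ s ≤ ψ x} :=
  ⟨1, fun w hw => hw.1.2⟩

lemma pI_nonneg : 0 ≤ pseudoInv ψ s := by
  by_cases hS : {x | x ∈ Icc (0:ℝ) 1 ∧ s ≤ ψ x}.Nonempty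
  · obtain ⟨w, hw⟩ := hS
    exact le_trans hw.1.1 (le_csSup pI_bddAbove hw)
  · rw [pseudoInv, Set.not_nonempty_iff_eq_empty.mp hS, Real.sSup_empty]

lemma pI_le_one : pseudoInv ψ s ≤ 1 := by
  by_cases hS : {x | x ∈ Icc (0:ℝ) 1 ∧ s ≤ ψ x}.Nonempty
  · exact csSup_le hS (fun w hw => hw.1.2)
  · rw [pseudoInv, Set.not_nonempty_iff_eq_empty.mp hS, Real.sSup_empty]; exact zero_le_one

lemma pI_lt {z : ℝ} (hz : z ∈ Icc (0:ℝ) 1) (h : pseudoInv ψ s < z) : ψ z < s := by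
  by_contra hcon
  push_neg at hcon
  exact absurd (le_csSup pI_bddAbove (⟨hz, hcon⟩ :
    z ∈ {x | x ∈ Icc (0:ℝ) 1 ∧ s ≤ ψ x})) (not_le.mpr h)

lemma pI_gt (h : IsGenerator ψ) {z : ℝ} (hz : 0 ≤ z) (hlt : z < pseudoInv ψ s) :
    s < ψ z := by
  have hS : {x | x ∈ Icc (0:ℝ) 1 ∧ s ≤ ψ x}.Nonempty := by
    by_contra hcon
    rw [pseudoInv, Set.not_nonempty_iff_eq_empty.mp hcon, Real.sSup_empty] at hlt
    linarith
  obtain ⟨w, hw, hzw⟩ := exists_lt_of_lt_csSup hS hlt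
  have := h.strict_anti z ⟨hz, le_trans hzw.le hw.1.2⟩ w hw.1 hzw
  exact lt_of_le_of_lt hw.2 this

lemma pI_le {z : ℝ} (h : IsGenerator ψ) (hz : z ∈ Icc (0:ℝ) 1) (hs : ψ z ≤ s) :
    pseudoInv ψ s ≤ z := by
  by_cases hS : {x | x ∈ Icc (0:ℝ) 1 ∧ s ≤ ψ x}.Nonempty
  · refine csSup_le hS (fun w hw => ?_)
    by_contra hcon
    push_neg at hcon
    have h1 : s < ψ z := lt_of_le_of_lt hw.2 (h.strict_anti z hz w hw.1 hcon)
    exact absurd hs (not_le.mpr h1)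
  · rw [pseudoInv, Set.not_nonempty_iff_eq_empty.mp hS, Real.sSup_empty]; exact hz.1

lemma archCopula_le (h : IsGenerator ψ) {x : ℝ} (hx : x ∈ Icc (0:ℝ) 1) (y : ℝ) :
    archCopula ψ x y ≤ x :=
  pI_le h hx le_self_add

lemma pI_pos (h : IsGenerator ψ) (hs : s < ψ 0) : 0 < pseudoInv ψ s := by
  have hmem : ψ ⁻¹' (Ioi s) ∈ nhdsWithin 0 (Ioi 0) :=
    h.rightCont_zero (Ioi_mem_nhds hs)
  rw [Metric.mem_nhdsWithin_iff] at hmem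
  obtain ⟨ε, hε, hsub⟩ := hmem
  set t : ℝ := min (ε / 2) 1 with ht
  have htpos : 0 < t := lt_min (half_pos hε) one_pos
  have htmem : t ∈ Metric.ball (0:ℝ) ε ∩ Ioi 0 := by
    constructor
    · rw [Metric.mem_ball, Real.dist_eq, sub_zero, abs_of_pos htpos]
      exact lt_of_le_of_lt (min_le_left _ _) (half_lt_self hε)
    · exact htpos
  have hst : s < ψ t := hsub htmem
  have : t ≤ pseudoInv ψ s :=
    le_csSup pI_bddAbove ⟨⟨htpos.le, min_le_right _ _⟩, hst.le⟩
  linarith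

lemma pI_eq_zero (h : IsGenerator ψ) (hs : ψ 0 ≤ s) : pseudoInv ψ s = 0 := by
  refine le_antisymm ?_ pI_nonneg
  by_cases hS : {x | x ∈ Icc (0:ℝ) 1 ∧ s ≤ ψ x}.Nonempty
  · refine csSup_le hS (fun w hw => ?_)
    by_contra hcon
    push_neg at hcon
    exact absurd hw.2 (not_le.mpr (lt_of_lt_of_le
      (h.strict_anti 0 ⟨le_rfl, zero_le_one⟩ w hw.1 hcon) hs))
  · rw [pseudoInv, Set.not_nonempty_iff_eq_empty.mp hS, Real.sSup_empty]

lemma pI_ne_top_of_pos (h : IsGenerator ψ) (hc : 0 < pseudoInv ψ s) : s ≠ ⊤ := by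
  intro hst
  have h2 : pseudoInv ψ s / 2 < pseudoInv ψ s := by linarith
  have h3 := pI_gt h (z := pseudoInv ψ s / 2) (by linarith) h2
  rw [hst] at h3
  exact not_top_lt h3

lemma pI_value (h : IsGenerator ψ) (hc1 : 0 < pseudoInv ψ s) (hc2 : pseudoInv ψ s < 1) :
    s ≤ ψ (pseudoInv ψ s) := by
  set c := pseudoInv ψ s with hcdef
  have hstop : s ≠ ⊤ := pI_ne_top_of_pos h hc1
  by_contra hcon
  push_neg at hcon
  have hctop : ψ c ≠ ⊤ := ne_top h ⟨hc1, hc2.le⟩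
  have hlt : F ψ c < s.toReal := (ENNReal.toReal_lt_toReal hctop hstop).mpr hcon
  have hev : (F ψ) ⁻¹' (Iio s.toReal) ∈ nhds c :=
    (F_contAt h ⟨hc1, hc2⟩).preimage_mem_nhds (Iio_mem_nhds hlt)
  have hIoo : Ioo 0 c ∈ nhdsWithin c (Iio c) := by
    refine mem_nhdsWithin.mpr ⟨Ioo 0 (c+1), isOpen_Ioo, ⟨hc1, by linarith⟩, ?_⟩
    rintro z ⟨⟨hz1, _⟩, hz2⟩
    exact ⟨hz1, hz2⟩
  have hne : ((F ψ) ⁻¹' (Iio s.toReal) ∩ Ioo 0 c).Nonempty :=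
    Filter.nonempty_of_mem (Filter.inter_mem (mem_nhdsWithin_of_mem_nhds hev) hIoo)
  obtain ⟨z, hz1, hz2⟩ := hne
  have hgt : s < ψ z := pI_gt h hz2.1.le hz2.2
  have hztop : ψ z ≠ ⊤ := ne_top h ⟨hz2.1, by linarith [hz2.2, hc2]⟩
  have := (ENNReal.toReal_lt_toReal hstop hztop).mpr hgt
  exact absurd hz1 (by simp only [mem_preimage, mem_Iio]; push_neg; exact this.le)

lemma pI_anti : Antitone (pseudoInv ψ) := by
  intro s s' hss'
  by_cases hS : {x | x ∈ Icc (0:ℝ) 1 ∧ s' ≤ ψ x}.Nonempty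
  · exact csSup_le hS (fun w hw => le_csSup pI_bddAbove ⟨hw.1, le_trans hss' hw.2⟩)
  · rw [pseudoInv, Set.not_nonempty_iff_eq_empty.mp hS, Real.sSup_empty]
    exact pI_nonneg

lemma pI_strict (h : IsGenerator ψ) (hs : s1 < s2) (h2 : 0 < pseudoInv ψ s2)
    (h1 : pseudoInv ψ s1 < 1) : pseudoInv ψ s2 < pseudoInv ψ s1 := by
  rcases lt_or_eq_of_le (pI_anti hs.le) with hlt | heq
  · exact hlt
  set c := pseudoInv ψ s2 with hcdef
  have hc2 : c < 1 := heq ▸ h1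
  have hval : s2 ≤ ψ c := pI_value h h2 hc2
  have hctop : ψ c ≠ ⊤ := ne_top h ⟨h2, hc2.le⟩
  have hs2top : s2 ≠ ⊤ := fun ht => hctop (top_le_iff.mp (ht ▸ hval))
  have hs1top : s1 ≠ ⊤ := (lt_of_lt_of_le hs le_top).ne
  have hFc : s2.toReal ≤ F ψ c := (ENNReal.toReal_le_toReal hs2top hctop).mpr hval
  have hs12 : s1.toReal < s2.toReal := (ENNReal.toReal_lt_toReal hs1top hs2top).mpr hs
  have hgtc : s1.toReal < F ψ c := lt_of_lt_of_le hs12 hFc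
  have hev : (F ψ) ⁻¹' (Ioi s1.toReal) ∈ nhds c :=
    (F_contAt h ⟨h2, hc2⟩).preimage_mem_nhds (Ioi_mem_nhds hgtc)
  have hIoo : Ioo c 1 ∈ nhdsWithin c (Ioi c) := by
    refine mem_nhdsWithin.mpr ⟨Iio 1, isOpen_Iio, hc2, ?_⟩
    rintro z ⟨hz1, hz2⟩
    exact ⟨hz2, hz1⟩
  have hne : ((F ψ) ⁻¹' (Ioi s1.toReal) ∩ Ioo c 1).Nonempty :=
    Filter.nonempty_of_mem (Filter.inter_mem (mem_nhdsWithin_of_mem_nhds hev) hIoo)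
  obtain ⟨z, hz1, hz2⟩ := hne
  have hzlt : ψ z < s1 := pI_lt ⟨by linarith [pI_nonneg (ψ := ψ) (s := s2), hz2.1],
      hz2.2.le⟩ (heq ▸ hz2.1)
  have hztop : ψ z ≠ ⊤ := ne_top h ⟨by linarith [pI_nonneg (ψ := ψ) (s := s2), hz2.1], hz2.2.le⟩
  have h5 : F ψ z < s1.toReal := (ENNReal.toReal_lt_toReal hztop hs1top).mpr hzlt
  simp only [mem_preimage, mem_Ioi] at hz1
  linarith

end AG
namespace AG

variable {φ : ℝ → ℝ≥0∞} {φseq : ℕ → ℝ → ℝ≥0∞}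

lemma pI_conv (hφ : IsGenerator φ) (hφseq : ∀ n, IsGenerator (φseq n))
    (hconv : ∀ x ∈ Ioc (0:ℝ) 1, Tendsto (fun n => φseq n x) atTop (nhds (φ x)))
    {sseq : ℕ → ℝ≥0∞} {s : ℝ≥0∞} (hs : Tendsto sseq atTop (nhds s)) :
    Tendsto (fun n => pseudoInv (φseq n) (sseq n)) atTop (nhds (pseudoInv φ s)) := by
  rw [tendsto_order]
  constructor
  · intro a ha
    by_cases ha0 : a < 0
    · filter_upwards with n
      exact lt_of_lt_of_le ha0 pI_nonneg
    push_neg at ha0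
    have hc : 0 < pseudoInv φ s := lt_of_le_of_lt ha0 ha
    set z := (a + pseudoInv φ s) / 2 with hzdef
    have hz1 : a < z := by simp only [hzdef]; linarith
    have hz2 : z < pseudoInv φ s := by simp only [hzdef]; linarith
    have hz0 : 0 < z := by simp only [hzdef]; linarith
    have hzle : z ≤ 1 := le_trans hz2.le pI_le_one
    have hφz : s < φ z := pI_gt hφ hz0.le hz2
    obtain ⟨r, hr1, hr2⟩ := exists_between hφz
    have h1 : ∀ᶠ n in atTop, sseq n < r := hs.eventually (eventually_lt_nhds hr1)
    have h2 : ∀ᶠ n in atTop, r < φseq n z :=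
      (hconv z ⟨hz0, hzle⟩).eventually (eventually_gt_nhds hr2)
    filter_upwards [h1, h2] with n h1n h2n
    exact lt_of_lt_of_le hz1
      (le_csSup pI_bddAbove ⟨⟨hz0.le, hzle⟩, (lt_trans h1n h2n).le⟩)
  · intro b hb
    by_cases hb1 : 1 < b
    · filter_upwards with n
      exact lt_of_le_of_lt pI_le_one hb1
    push_neg at hb1
    set z := (pseudoInv φ s + b) / 2 with hzdef
    have hc0 : (0:ℝ) ≤ pseudoInv φ s := pI_nonneg
    have hz1 : pseudoInv φ s < z := by simp only [hzdef]; linarith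
    have hz2 : z < b := by simp only [hzdef]; linarith
    have hz0 : 0 < z := by simp only [hzdef]; linarith
    have hzle : z ≤ 1 := by linarith
    have hφz : φ z < s := pI_lt ⟨hz0.le, hzle⟩ hz1
    obtain ⟨r, hr1, hr2⟩ := exists_between hφz
    have h1 : ∀ᶠ n in atTop, φseq n z < r :=
      (hconv z ⟨hz0, hzle⟩).eventually (eventually_lt_nhds hr1)
    have h2 : ∀ᶠ n in atTop, r < sseq n := hs.eventually (eventually_gt_nhds hr2)
    filter_upwards [h1, h2] with n h1n h2n
    exact lt_of_le_of_lt (pI_le (hφseq n) ⟨hz0.le, hzle⟩ (lt_trans h1n h2n).le) hz2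

lemma F_conv (hφ : IsGenerator φ)
    (hconv : ∀ x ∈ Ioc (0:ℝ) 1, Tendsto (fun n => φseq n x) atTop (nhds (φ x)))
    {u : ℝ} (hu : u ∈ Ioc (0:ℝ) 1) :
    Tendsto (fun n => F (φseq n) u) atTop (nhds (F φ u)) :=
  (ENNReal.tendsto_toReal (ne_top hφ hu)).comp (hconv u hu)

lemma Dplus_conv (hφ : IsGenerator φ) (hφseq : ∀ n, IsGenerator (φseq n))
    (hconv : ∀ x ∈ Ioc (0:ℝ) 1, Tendsto (fun n => φseq n x) atTop (nhds (φ x)))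
    {x : ℝ} (hx : x ∈ Ioo (0:ℝ) 1) (hcont : ContinuousAt (Dplus φ) x) {c : ℕ → ℝ}
    (hc : Tendsto c atTop (nhds x)) (hc' : ∀ᶠ n in atTop, c n ∈ Ioo (0:ℝ) 1) :
    Tendsto (fun n => Dplus (φseq n) (c n)) atTop (nhds (Dplus φ x)) := by
  rw [tendsto_order]
  constructor
  · intro a ha
    have hev : (Dplus φ) ⁻¹' (Ioi a) ∈ nhds x := hcont.preimage_mem_nhds (Ioi_mem_nhds ha)
    have hIoo : Ioo 0 x ∈ nhdsWithin x (Iio x) := by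
      refine mem_nhdsWithin.mpr ⟨Ioi 0, isOpen_Ioi, hx.1, ?_⟩
      rintro w ⟨hw1, hw2⟩; exact ⟨hw1, hw2⟩
    obtain ⟨u, hu1, hu2⟩ := Filter.nonempty_of_mem
      (Filter.inter_mem (mem_nhdsWithin_of_mem_nhds hev) hIoo)
    simp only [mem_preimage, mem_Ioi] at hu1
    set v := (u + x) / 2 with hvdef
    have huv : u < v := by simp only [hvdef]; linarith [hu2.2]
    have hvx : v < x := by simp only [hvdef]; linarith [hu2.2]
    have hv1 : v < 1 := lt_trans hvx hx.2
    have hslope : a < (F φ v - F φ u) / (v - u) :=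
      lt_of_lt_of_le hu1 (Dplus_le_slope hφ ⟨hu2.1, lt_trans hu2.2 hx.2⟩ ⟨huv, hv1.le⟩)
    have hFu := F_conv hφ hconv (u := u) ⟨hu2.1, by linarith [hu2.2, hx.2]⟩
    have hFv := F_conv hφ hconv (u := v) ⟨by linarith [hu2.1], hv1.le⟩
    have hsl : Tendsto (fun n => (F (φseq n) v - F (φseq n) u) / (v - u)) atTop
        (nhds ((F φ v - F φ u) / (v - u))) := (hFv.sub hFu).div_const _
    have h1 := hsl.eventually (eventually_gt_nhds hslope)
    have h2 : ∀ᶠ n in atTop, v < c n := hc.eventually (eventually_gt_nhds hvx)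
    filter_upwards [h1, h2, hc'] with n h1n h2n h3n
    refine lt_of_lt_of_le h1n (le_trans (slope_le_Dplus (hφseq n) hu2.1 huv hv1) ?_)
    exact Dplus_mono (hφseq n) (by linarith [hu2.1]) h2n.le h3n.2
  · intro b hb
    have hev : (Dplus φ) ⁻¹' (Iio b) ∈ nhds x := hcont.preimage_mem_nhds (Iio_mem_nhds hb)
    have hIoo : Ioo x 1 ∈ nhdsWithin x (Ioi x) := by
      refine mem_nhdsWithin.mpr ⟨Iio 1, isOpen_Iio, hx.2, ?_⟩
      rintro w ⟨hw1, hw2⟩; exact ⟨hw2, hw1⟩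
    obtain ⟨t, ht1, ht2⟩ := Filter.nonempty_of_mem
      (Filter.inter_mem (mem_nhdsWithin_of_mem_nhds hev) hIoo)
    simp only [mem_preimage, mem_Iio] at ht1
    set w := (x + t) / 2 with hwdef
    have hxw : x < w := by simp only [hwdef]; linarith [ht2.1]
    have hwt : w < t := by simp only [hwdef]; linarith [ht2.1]
    have hw0 : 0 < w := lt_trans hx.1 hxw
    have hw1 : w < 1 := lt_trans hwt ht2.2
    have hslope : (F φ t - F φ w) / (t - w) < b :=
      lt_of_le_of_lt (slope_le_Dplus hφ hw0 hwt ht2.2) ht1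
    have hFw := F_conv hφ hconv (u := w) ⟨hw0, hw1.le⟩
    have hFt := F_conv hφ hconv (u := t) ⟨lt_trans hw0 hwt, ht2.2.le⟩
    have hsl : Tendsto (fun n => (F (φseq n) t - F (φseq n) w) / (t - w)) atTop
        (nhds ((F φ t - F φ w) / (t - w))) := (hFt.sub hFw).div_const _
    have h1 := hsl.eventually (eventually_lt_nhds hslope)
    have h2 : ∀ᶠ n in atTop, c n < w := hc.eventually (eventually_lt_nhds hxw)
    filter_upwards [h1, h2, hc'] with n h1n h2n h3n
    refine lt_of_le_of_lt (le_trans ?_ (Dplus_le_slope (hφseq n) ⟨hw0, hw1⟩ ⟨hwt, ht2.2.le⟩)) h1n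
    exact Dplus_mono (hφseq n) h3n.1 h2n.le hw1

end AG
namespace AG

variable {ψ : ℝ → ℝ≥0∞} {x y : ℝ}

lemma psi_pos (h : IsGenerator ψ) (hx0 : 0 ≤ x) (hx1 : x < 1) : 0 < ψ x := by
  have := h.strict_anti x ⟨hx0, hx1.le⟩ 1 ⟨zero_le_one, le_rfl⟩ hx1
  rw [h.map_one] at this
  exact pos_of_gt (by simpa using this)

lemma one_lt_psi0 (h : IsGenerator ψ) : 1 < ψ 0 := by
  have := h.strict_anti 0 ⟨le_rfl, zero_le_one⟩ (1/2) ⟨by norm_num, by norm_num⟩ (by norm_num)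
  rwa [h.normalized] at this

lemma pI_lt_one {s : ℝ≥0∞} (h : IsGenerator ψ) (hs : s ≠ 0) : pseudoInv ψ s < 1 := by
  by_cases hst : s = ⊤
  · refine lt_of_le_of_lt (pI_le h (z := 1/2) (by norm_num) (hst ▸ le_top)) (by norm_num)
  set t : ℝ := min 1 s.toReal with htdef
  have hts : 0 < s.toReal := ENNReal.toReal_pos hs hst
  have ht0 : 0 < t := lt_min one_pos hts
  have ht1 : t ≤ 1 := min_le_left _ _
  have hw1 : 1 - t / 2 < 1 := by linarith
  have hw0 : (0:ℝ) ≤ 1 - t / 2 := by linarith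
  have hcvx := h.convex (1/2) ⟨by norm_num, by norm_num⟩ 1 ⟨zero_le_one, le_rfl⟩ t ⟨ht0.le, ht1⟩
  have harg : t * (1/2) + (1 - t) * 1 = 1 - t / 2 := by ring
  rw [harg, h.normalized, h.map_one, mul_one, mul_zero, add_zero] at hcvx
  have hofr : ENNReal.ofReal t ≤ s := by
    calc ENNReal.ofReal t ≤ ENNReal.ofReal s.toReal :=
          ENNReal.ofReal_le_ofReal (min_le_right _ _)
      _ = s := ENNReal.ofReal_toReal hst
  exact lt_of_le_of_lt (pI_le h ⟨hw0, hw1.le⟩ (le_trans hcvx hofr)) hw1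

lemma levelFn_zero_top (h : IsGenerator ψ) (h0 : ψ 0 = ⊤) (hx : x ∈ Ioo (0:ℝ) 1) :
    levelFn ψ 0 x = 0 := by
  rw [levelFn, h0, ENNReal.top_sub (ne_top h ⟨hx.1, hx.2.le⟩)]
  exact pI_eq_zero h le_top

lemma guard_strict (h : IsGenerator ψ) (hx : x ∈ Ioo (0:ℝ) 1) (hy0 : 0 ≤ y)
    (hy : y < levelFn ψ 0 x) : ψ 0 < ψ x + ψ y := by
  have hgt : ψ 0 - ψ x < ψ y := pI_gt h hy0 hy
  by_cases h0 : ψ 0 = ⊤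
  · rw [h0, ENNReal.top_sub (ne_top h ⟨hx.1, hx.2.le⟩)] at hgt
    exact absurd hgt not_top_lt
  have hle : ψ x ≤ ψ 0 := anti h ⟨le_rfl, zero_le_one⟩ ⟨hx.1.le, hx.2.le⟩ hx.1.le
  have := (ENNReal.sub_lt_iff_lt_right (ne_top h ⟨hx.1, hx.2.le⟩) hle).mp hgt
  rwa [add_comm] at this

lemma copula_eq_zero_of_guard (h : IsGenerator ψ) (hx : x ∈ Ioo (0:ℝ) 1) (hy0 : 0 ≤ y)
    (hy : y < levelFn ψ 0 x) : archCopula ψ x y = 0 :=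
  pI_eq_zero h (guard_strict h hx hy0 hy).le

lemma guard_of_lt (h : IsGenerator ψ) (hx : x ∈ Ioo (0:ℝ) 1) (hy : y ∈ Ioo (0:ℝ) 1)
    (hlt : levelFn ψ 0 x < y) : ψ x + ψ y < ψ 0 := by
  by_cases h0 : ψ 0 = ⊤
  · rw [h0]
    exact ENNReal.add_lt_top.mpr ⟨h.finite x ⟨hx.1, hx.2.le⟩, h.finite y ⟨hy.1, hy.2.le⟩⟩
  have hyy : ψ y < ψ 0 - ψ x := pI_lt ⟨hy.1.le, hy.2.le⟩ hlt
  have hle : ψ x ≤ ψ 0 := anti h ⟨le_rfl, zero_le_one⟩ ⟨hx.1.le, hx.2.le⟩ hx.1.le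
  calc ψ x + ψ y < ψ x + (ψ 0 - ψ x) :=
        ENNReal.add_lt_add_left (ne_top h ⟨hx.1, hx.2.le⟩) hyy
    _ = ψ 0 := add_tsub_cancel_of_le hle

lemma guard_off_imp_le (h : IsGenerator ψ) (hx : x ∈ Ioo (0:ℝ) 1) (hy : y ∈ Ioo (0:ℝ) 1)
    (hg : ¬ y < levelFn ψ 0 x) : ψ x + ψ y ≤ ψ 0 := by
  by_contra hcon
  push_neg at hcon
  have hxt : ψ x ≠ ⊤ := ne_top h ⟨hx.1, hx.2.le⟩
  have hyt : ψ y ≠ ⊤ := ne_top h ⟨hy.1, hy.2.le⟩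
  have h0t : ψ 0 ≠ ⊤ :=
    (lt_of_lt_of_le hcon (le_of_lt (ENNReal.add_lt_top.mpr ⟨lt_top_iff_ne_top.mpr hxt,
      lt_top_iff_ne_top.mpr hyt⟩))).ne
  have hle : ψ x ≤ ψ 0 := anti h ⟨le_rfl, zero_le_one⟩ ⟨hx.1.le, hx.2.le⟩ hx.1.le
  have hgt : ψ 0 - ψ x < ψ y := by
    rw [ENNReal.sub_lt_iff_lt_right hxt hle, add_comm]
    exact hcon
  have hsubt : ψ 0 - ψ x ≠ ⊤ := (lt_of_le_of_lt tsub_le_self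
    (lt_top_iff_ne_top.mpr h0t)).ne
  have hFy : (ψ 0 - ψ x).toReal < F ψ y := (ENNReal.toReal_lt_toReal hsubt hyt).mpr hgt
  have hev : (F ψ) ⁻¹' (Ioi (ψ 0 - ψ x).toReal) ∈ nhds y :=
    (F_contAt h hy).preimage_mem_nhds (Ioi_mem_nhds hFy)
  have hIoo : Ioo y 1 ∈ nhdsWithin y (Ioi y) := by
    refine mem_nhdsWithin.mpr ⟨Iio 1, isOpen_Iio, hy.2, ?_⟩
    rintro w ⟨hw1, hw2⟩; exact ⟨hw2, hw1⟩
  obtain ⟨w, hw1, hw2⟩ := Filter.nonempty_of_mem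
    (Filter.inter_mem (mem_nhdsWithin_of_mem_nhds hev) hIoo)
  simp only [mem_preimage, mem_Ioi] at hw1
  have hwt : ψ w ≠ ⊤ := ne_top h ⟨lt_trans hy.1 hw2.1, hw2.2.le⟩
  have hψw : ψ 0 - ψ x < ψ w := (ENNReal.toReal_lt_toReal hsubt hwt).mp hw1
  have : w ≤ levelFn ψ 0 x :=
    le_csSup pI_bddAbove ⟨⟨by linarith [hy.1, hw2.1], hw2.2.le⟩, hψw.le⟩
  exact hg (by linarith [hw2.1])

/-- On the guard-off region the copula value `c` satisfies `F ψ c ≥ (ψ x + ψ y).toReal`. -/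
lemma value_ge (h : IsGenerator ψ) (hx : x ∈ Ioo (0:ℝ) 1) (hy : y ∈ Ioo (0:ℝ) 1)
    (hg : ¬ y < levelFn ψ 0 x) : (ψ x + ψ y).toReal ≤ F ψ (archCopula ψ x y) := by
  set c := archCopula ψ x y with hcdef
  have hst : ψ x + ψ y ≠ ⊤ :=
    (ENNReal.add_lt_top.mpr ⟨h.finite x ⟨hx.1, hx.2.le⟩, h.finite y ⟨hy.1, hy.2.le⟩⟩).ne
  have hcx : c ≤ x := archCopula_le h ⟨hx.1.le, hx.2.le⟩ y
  rcases eq_or_lt_of_le (pI_nonneg (ψ := ψ) (s := ψ x + ψ y)) with hc0 | hc0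
  · have hles : ψ x + ψ y ≤ ψ 0 := guard_off_imp_le h hx hy hg
    have hges : ψ 0 ≤ ψ x + ψ y := by
      by_contra hcon
      push_neg at hcon
      have hpos := pI_pos h hcon
      rw [← hc0] at hpos
      exact lt_irrefl _ hpos
    have heq : ψ x + ψ y = ψ 0 := le_antisymm hles hges
    have hc0' : c = 0 := hc0.symm
    rw [hc0', heq]
    exact le_of_eq rfl
  · have hc1 : c < 1 := lt_of_le_of_lt hcx hx.2
    have hval : ψ x + ψ y ≤ ψ c := pI_value h hc0 hc1
    exact (ENNReal.toReal_le_toReal hst (ne_top h ⟨hc0, hc1.le⟩)).mpr hval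

lemma copula_strictMono_y (h : IsGenerator ψ) (hx : x ∈ Ioo (0:ℝ) 1) {y1 y2 : ℝ}
    (hy1 : levelFn ψ 0 x < y1) (h12 : y1 < y2) (hy2 : y2 ≤ 1) :
    archCopula ψ x y1 < archCopula ψ x y2 := by
  have hy10 : 0 < y1 := lt_of_le_of_lt pI_nonneg hy1
  have hy11 : y1 < 1 := lt_of_lt_of_le h12 hy2
  have hstep : ψ y2 < ψ y1 := h.strict_anti y1 ⟨hy10.le, hy11.le⟩ y2
    ⟨by linarith, hy2⟩ h12
  have hadd : ψ x + ψ y2 < ψ x + ψ y1 :=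
    ENNReal.add_lt_add_left (ne_top h ⟨hx.1, hx.2.le⟩) hstep
  refine pI_strict h hadd ?_ ?_
  · exact pI_pos h (guard_of_lt h hx ⟨hy10, hy11⟩ hy1)
  · exact lt_of_le_of_lt (archCopula_le h ⟨hx.1.le, hx.2.le⟩ y2) hx.2

lemma levelFn_strictAnti (h : IsGenerator ψ) (h0 : ψ 0 ≠ ⊤) {x1 x2 : ℝ}
    (hx1 : x1 ∈ Ioo (0:ℝ) 1) (hx2 : x2 ∈ Ioo (0:ℝ) 1) (h12 : x1 < x2) :
    levelFn ψ 0 x2 < levelFn ψ 0 x1 := by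
  have hψ12 : ψ x2 < ψ x1 := h.strict_anti x1 ⟨hx1.1.le, hx1.2.le⟩ x2 ⟨hx2.1.le, hx2.2.le⟩ h12
  have hle1 : ψ x1 ≤ ψ 0 := anti h ⟨le_rfl, zero_le_one⟩ ⟨hx1.1.le, hx1.2.le⟩ hx1.1.le
  have hle2 : ψ x2 ≤ ψ 0 := anti h ⟨le_rfl, zero_le_one⟩ ⟨hx2.1.le, hx2.2.le⟩ hx2.1.le
  have hsub : ψ 0 - ψ x1 < ψ 0 - ψ x2 := by
    have h1 := ENNReal.toReal_sub_of_le hle1 h0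
    have h2 := ENNReal.toReal_sub_of_le hle2 h0
    have hf : (ψ x2).toReal < (ψ x1).toReal :=
      (ENNReal.toReal_lt_toReal (ne_top h ⟨hx2.1, hx2.2.le⟩)
        (ne_top h ⟨hx1.1, hx1.2.le⟩)).mpr hψ12
    have ht1 : ψ 0 - ψ x1 ≠ ⊤ := (lt_of_le_of_lt tsub_le_self (lt_top_iff_ne_top.mpr h0)).ne
    have ht2 : ψ 0 - ψ x2 ≠ ⊤ := (lt_of_le_of_lt tsub_le_self (lt_top_iff_ne_top.mpr h0)).ne
    rw [← ENNReal.toReal_lt_toReal ht1 ht2, h1, h2]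
    linarith
  refine pI_strict h hsub ?_ ?_
  · refine pI_pos h (ENNReal.sub_lt_self h0 ?_ ?_)
    · exact (lt_trans zero_lt_one (one_lt_psi0 h)).ne'
    · exact (psi_pos h hx2.1.le hx2.2).ne'
  · refine pI_lt_one h ?_
    rw [← pos_iff_ne_zero, tsub_pos_iff_lt]
    have := h.strict_anti 0 ⟨le_rfl, zero_le_one⟩ x1 ⟨hx1.1.le, hx1.2.le⟩ hx1.1
    exact this

lemma levelFn_antitoneOn (h : IsGenerator ψ) : AntitoneOn (levelFn ψ 0) (Icc (0:ℝ) 1) := by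
  intro x1 hx1 x2 hx2 h12
  exact pI_anti (tsub_le_tsub_left (anti h hx1 hx2 h12) _)

end AG
namespace AG

variable {ψ φ : ℝ → ℝ≥0∞} {φseq : ℕ → ℝ → ℝ≥0∞} {x y : ℝ}

lemma ratio_mem (h : IsGenerator ψ) (hx : x ∈ Ioo (0:ℝ) 1) {c : ℝ}
    (hc0 : 0 ≤ c) (hcx : c ≤ x) :
    Dplus ψ x / Dplus ψ c ∈ Icc (0:ℝ) 1 := by
  have hDx : Dplus ψ x < 0 := Dplus_neg h hx
  have key : Dplus ψ c ≤ Dplus ψ x ∨ Dplus ψ c = 0 := by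
    rcases eq_or_lt_of_le hc0 with rfl | hcpos
    · by_cases h0 : ψ 0 = ⊤
      · exact Or.inr (Dplus_zero_top h h0)
      · exact Dplus_zero_le h h0 hx
    · exact Or.inl (Dplus_mono h hcpos hcx hx.2)
  rcases key with hD | hD
  · have hDc : Dplus ψ c < 0 := lt_of_le_of_lt hD hDx
    constructor
    · rw [← neg_div_neg_eq]
      exact div_nonneg (by linarith) (by linarith)
    · rw [div_le_one_iff]
      exact Or.inr (Or.inr ⟨hDc, hD⟩)
  · rw [hD, div_zero]
    exact ⟨le_rfl, zero_le_one⟩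

lemma archKernel_mem (h : IsGenerator ψ) (hx : x ∈ Icc (0:ℝ) 1) (y : ℝ) :
    archKernel ψ x y ∈ Icc (0:ℝ) 1 := by
  rw [archKernel]
  by_cases h01 : x = 0 ∨ x = 1
  · rw [if_pos h01]; exact ⟨zero_le_one, le_rfl⟩
  rw [if_neg h01]
  by_cases hg : y < levelFn ψ 0 x
  · rw [if_pos hg]; exact ⟨le_rfl, zero_le_one⟩
  rw [if_neg hg]
  push_neg at h01
  have hxI : x ∈ Ioo (0:ℝ) 1 :=
    ⟨lt_of_le_of_ne hx.1 (Ne.symm h01.1), lt_of_le_of_ne hx.2 h01.2⟩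
  exact ratio_mem h hxI pI_nonneg (archCopula_le h hx y)

lemma eventually_guard_off (hφseq : ∀ n, IsGenerator (φseq n)) (hx : x ∈ Ioo (0:ℝ) 1)
    (hy0 : 0 ≤ y)
    (hpos : ∀ᶠ n in atTop, 0 < archCopula (φseq n) x y) :
    ∀ᶠ n in atTop, ¬ y < levelFn (φseq n) 0 x := by
  filter_upwards [hpos] with n hn
  intro hcon
  rw [copula_eq_zero_of_guard (hφseq n) hx hy0 hcon] at hn
  exact lt_irrefl _ hn

lemma kernel_conv (hφ : IsGenerator φ) (hφseq : ∀ n, IsGenerator (φseq n))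
    (hconv : ∀ x ∈ Ioc (0:ℝ) 1, Tendsto (fun n => φseq n x) atTop (nhds (φ x)))
    (hx : x ∈ Ioo (0:ℝ) 1) (hy : y ∈ Ioo (0:ℝ) 1)
    (hcx : ContinuousAt (Dplus φ) x)
    (hne : y ≠ levelFn φ 0 x)
    (hcc : levelFn φ 0 x < y → ContinuousAt (Dplus φ) (archCopula φ x y)) :
    Tendsto (fun n => archKernel (φseq n) x y) atTop (nhds (archKernel φ x y)) := by
  have hx01 : ¬(x = 0 ∨ x = 1) := by
    rintro (rfl | rfl)
    · exact lt_irrefl _ hx.1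
    · exact lt_irrefl _ hx.2
  have hsn : Tendsto (fun n => φseq n x + φseq n y) atTop (nhds (φ x + φ y)) :=
    (hconv x ⟨hx.1, hx.2.le⟩).add (hconv y ⟨hy.1, hy.2.le⟩)
  have hCn : Tendsto (fun n => archCopula (φseq n) x y) atTop
      (nhds (archCopula φ x y)) := pI_conv hφ hφseq hconv hsn
  rcases hne.lt_or_gt with hlt | hgt
  · -- Case B : y < levelFn φ 0 x, the limit kernel is 0
    rw [archKernel, if_neg hx01, if_pos hlt]
    have hs_gt : φ 0 < φ x + φ y := guard_strict hφ hx hy.1.le hlt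
    have hstop : φ x + φ y ≠ ⊤ :=
      (ENNReal.add_lt_top.mpr ⟨hφ.finite x ⟨hx.1, hx.2.le⟩,
        hφ.finite y ⟨hy.1, hy.2.le⟩⟩).ne
    have h0top : φ 0 ≠ ⊤ := fun hc => hstop (top_le_iff.mp (hc ▸ hs_gt.le))
    have hC0 : archCopula φ x y = 0 := pI_eq_zero hφ hs_gt.le
    rw [hC0] at hCn
    set sb : ℝ := (φ x + φ y).toReal with hsbdef
    set f0 : ℝ := (φ 0).toReal with hf0def
    have hδ : f0 < sb := (ENNReal.toReal_lt_toReal h0top hstop).mpr hs_gt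
    set δ : ℝ := sb - f0 with hδdef
    have hδ0 : 0 < δ := by simp only [hδdef]; linarith
    have hsbn : Tendsto (fun n => (φseq n x + φseq n y).toReal) atTop (nhds sb) :=
      (ENNReal.tendsto_toReal hstop).comp hsn
    rw [tendsto_order]
    constructor
    · intro a ha
      filter_upwards with n
      exact lt_of_lt_of_le ha (archKernel_mem (hφseq n) ⟨hx.1.le, hx.2.le⟩ y).1
    intro b hb
    set ε : ℝ := b / 2 with hεdef
    have hε0 : 0 < ε := by simp only [hεdef]; linarith
    set u : ℝ := x / 2 with hudef
    have hu0 : 0 < u := by simp only [hudef]; linarith [hx.1]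
    have hux : u < x := by simp only [hudef]; linarith [hx.1]
    set B : ℝ := |(F φ x - F φ u) / (x - u)| + 1 with hBdef
    have hB0 : 0 < B := by positivity
    have hslopeconv : Tendsto (fun n => (F (φseq n) x - F (φseq n) u) / (x - u)) atTop
        (nhds ((F φ x - F φ u) / (x - u))) :=
      ((F_conv hφ hconv ⟨hx.1, hx.2.le⟩).sub
        (F_conv hφ hconv ⟨hu0, by linarith [hx.2]⟩)).div_const _
    have habs : ∀ᶠ n in atTop, |(F (φseq n) x - F (φseq n) u) / (x - u)| < B := by
      have h1 : |(F φ x - F φ u) / (x - u)| < B := by simp only [hBdef]; linarith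
      exact hslopeconv.abs.eventually (eventually_lt_nhds h1)
    have hnum : ∀ᶠ n in atTop, |Dplus (φseq n) x| ≤ B := by
      filter_upwards [habs] with n hn
      have hlow := slope_le_Dplus (hφseq n) hu0 hux hx.2
      have hneg := Dplus_neg (hφseq n) hx
      rw [abs_of_nonpos hneg.le]
      have h3 := neg_le_abs ((F (φseq n) x - F (φseq n) u) / (x - u))
      calc -Dplus (φseq n) x ≤ -((F (φseq n) x - F (φseq n) u) / (x - u)) := by linarith
        _ ≤ |(F (φseq n) x - F (φseq n) u) / (x - u)| := h3
        _ ≤ B := hn.le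
    set m : ℝ := min (ε * δ / (2 * B)) 1 with hmdef
    have hm0 : 0 < m := lt_min (by positivity) one_pos
    have htset : (fun t => F φ t) ⁻¹' (Iio (f0 + δ/4)) ∈ nhdsWithin (0:ℝ) (Ioi 0) := by
      have hten : Tendsto (fun t => F φ t) (nhdsWithin 0 (Ioi 0)) (nhds f0) :=
        (ENNReal.tendsto_toReal h0top).comp hφ.rightCont_zero
      exact hten (Iio_mem_nhds (by linarith))
    have hIoo : Ioo (0:ℝ) m ∈ nhdsWithin (0:ℝ) (Ioi 0) := by
      refine mem_nhdsWithin.mpr ⟨Iio m, isOpen_Iio, hm0, ?_⟩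
      rintro w ⟨hw1, hw2⟩; exact ⟨hw2, hw1⟩
    obtain ⟨t, ht1, ht2⟩ := Filter.nonempty_of_mem (Filter.inter_mem htset hIoo)
    simp only [mem_preimage, mem_Iio] at ht1
    have ht0 : 0 < t := ht2.1
    have htm : t < m := ht2.2
    have ht1' : t ≤ 1 := le_of_lt (lt_of_lt_of_le htm (min_le_right _ _))
    have htB : t ≤ ε * δ / (2 * B) := le_of_lt (lt_of_lt_of_le htm (min_le_left _ _))
    have he2 : ∀ᶠ n in atTop, F (φseq n) t - (φseq n x + φseq n y).toReal ≤ -(δ/2) := by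
      have hconv_t : Tendsto (fun n => F (φseq n) t - (φseq n x + φseq n y).toReal) atTop
          (nhds (F φ t - sb)) := (F_conv hφ hconv ⟨ht0, ht1'⟩).sub hsbn
      have h4 : F φ t - sb < -(δ/2) := by
        simp only [hδdef] at ht1 ⊢
        linarith
      exact hconv_t.eventually (eventually_le_nhds h4)
    have he3 : ∀ᶠ n in atTop, archCopula (φseq n) x y < t :=
      hCn.eventually (eventually_lt_nhds ht0)
    filter_upwards [hnum, he2, he3] with n h1n h2n h3n
    rw [archKernel, if_neg hx01]
    by_cases hgn : y < levelFn (φseq n) 0 x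
    · rw [if_pos hgn]; linarith
    rw [if_neg hgn]
    set cn := archCopula (φseq n) x y with hcndef
    have hcn0 : (0:ℝ) ≤ cn := pI_nonneg
    have hcnx : cn ≤ x := archCopula_le (hφseq n) ⟨hx.1.le, hx.2.le⟩ y
    have hval : (φseq n x + φseq n y).toReal ≤ F (φseq n) cn := value_ge (hφseq n) hx hy hgn
    rcases Dplus_le_slope_or (hφseq n) ⟨hcn0, lt_of_le_of_lt hcnx hx.2⟩ ⟨h3n, ht1'⟩
      with hD | hD
    swap
    · rw [hD, div_zero]; linarith
    have htc : 0 < t - cn := by linarith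
    have hch1 : (F (φseq n) t - F (φseq n) cn) / (t - cn)
        ≤ (F (φseq n) t - (φseq n x + φseq n y).toReal) / (t - cn) :=
      (div_le_div_iff_of_pos_right htc).mpr (by linarith)
    have hch2 : (F (φseq n) t - (φseq n x + φseq n y).toReal) / (t - cn)
        ≤ (F (φseq n) t - (φseq n x + φseq n y).toReal) / t := by
      rw [div_le_div_iff₀ htc ht0]
      have hhint : 0 ≤ -(F (φseq n) t - (φseq n x + φseq n y).toReal) * cn :=
        mul_nonneg (by linarith) hcn0
      nlinarith [hhint]
    have hBε : 0 < B / ε := by positivity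
    have hch3 : (F (φseq n) t - (φseq n x + φseq n y).toReal) / t ≤ -(B/ε) := by
      rw [div_le_iff₀ ht0]
      have h5 : (B / ε) * t ≤ (B / ε) * (ε * δ / (2 * B)) :=
        mul_le_mul_of_nonneg_left htB hBε.le
      have h6 : (B / ε) * (ε * δ / (2 * B)) = δ / 2 := by
        field_simp
      linarith
    have hdenom : Dplus (φseq n) cn ≤ -(B/ε) :=
      le_trans hD (le_trans hch1 (le_trans hch2 hch3))
    have hfin : Dplus (φseq n) x / Dplus (φseq n) cn ≤ ε := by
      rw [← neg_div_neg_eq]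
      have h5 : -(Dplus (φseq n) x) ≤ B :=
        le_trans (neg_le_abs _) h1n
      have h6 : B / ε ≤ -(Dplus (φseq n) cn) := by linarith
      calc (-(Dplus (φseq n) x)) / (-(Dplus (φseq n) cn)) ≤ B / (B / ε) :=
            div_le_div₀ hB0.le h5 hBε h6
        _ = ε := by
            field_simp
    linarith
  · -- Case A : levelFn φ 0 x < y, the limit kernel is a genuine ratio
    have hs_lt : φ x + φ y < φ 0 := guard_of_lt hφ hx hy hgt
    set c := archCopula φ x y with hcdef
    have hc0 : 0 < c := pI_pos hφ hs_lt
    have hcx' : c ≤ x := archCopula_le hφ ⟨hx.1.le, hx.2.le⟩ y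
    have hcI : c ∈ Ioo (0:ℝ) 1 := ⟨hc0, lt_of_le_of_lt hcx' hx.2⟩
    have hpos : ∀ᶠ n in atTop, 0 < archCopula (φseq n) x y :=
      hCn.eventually (eventually_gt_nhds hc0)
    have hoff := eventually_guard_off hφseq hx hy.1.le hpos
    have hcIn : ∀ᶠ n in atTop, archCopula (φseq n) x y ∈ Ioo (0:ℝ) 1 := by
      filter_upwards [hpos] with n hn
      exact ⟨hn, lt_of_le_of_lt (archCopula_le (hφseq n) ⟨hx.1.le, hx.2.le⟩ y) hx.2⟩
    have hDx : Tendsto (fun n => Dplus (φseq n) x) atTop (nhds (Dplus φ x)) :=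
      Dplus_conv hφ hφseq hconv hx hcx tendsto_const_nhds (Filter.Eventually.of_forall
        (fun _ => hx))
    have hDc : Tendsto (fun n => Dplus (φseq n) (archCopula (φseq n) x y)) atTop
        (nhds (Dplus φ c)) := Dplus_conv hφ hφseq hconv hcI (hcc hgt) hCn hcIn
    have hdiv := hDx.div hDc (Dplus_neg hφ hcI).ne
    rw [archKernel, if_neg hx01, if_neg (not_lt.mpr hgt.le)]
    refine Tendsto.congr' ?_ hdiv
    filter_upwards [hoff] with n hn
    rw [archKernel, if_neg hx01, if_neg hn]
    rfl

end AG
namespace AG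

variable {ψ : ℝ → ℝ≥0∞} {z : ℝ}

noncomputable def clamp01 (z : ℝ) : ℝ := min 1 (max 0 z)

lemma clamp01_mono : Monotone clamp01 :=
  fun _ _ hab => min_le_min le_rfl (max_le_max le_rfl hab)

lemma clamp01_mem (z : ℝ) : clamp01 z ∈ Icc (0:ℝ) 1 :=
  ⟨le_min zero_le_one (le_max_left 0 z), min_le_left 1 _⟩

lemma clamp01_eq (hz : z ∈ Icc (0:ℝ) 1) : clamp01 z = z := by
  rw [clamp01, max_eq_right hz.1, min_eq_right hz.2]

noncomputable def Phi (ψ : ℝ → ℝ≥0∞) : ℝ → ℝ≥0∞ := fun z => ψ (clamp01 z)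

lemma Phi_anti (h : IsGenerator ψ) : Antitone (Phi ψ) :=
  fun _ _ hab => anti h (clamp01_mem _) (clamp01_mem _) (clamp01_mono hab)

lemma Phi_meas (h : IsGenerator ψ) : Measurable (Phi ψ) := (Phi_anti h).measurable

lemma Phi_eq (hz : z ∈ Icc (0:ℝ) 1) : Phi ψ z = ψ z := by rw [Phi, clamp01_eq hz]

lemma pI_meas : Measurable (pseudoInv ψ) := pI_anti.measurable

noncomputable def Fc (ψ : ℝ → ℝ≥0∞) : ℝ → ℝ := fun z => (Phi ψ z).toReal

lemma Fc_meas (h : IsGenerator ψ) : Measurable (Fc ψ) :=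
  ENNReal.measurable_toReal.comp (Phi_meas h)

lemma Fc_eq (hz : z ∈ Icc (0:ℝ) 1) : Fc ψ z = F ψ z := by
  rw [Fc, Phi_eq hz]; rfl

noncomputable def Lc (ψ : ℝ → ℝ≥0∞) : ℝ → ℝ := fun z => pseudoInv ψ (ψ 0 - Phi ψ z)

lemma Lc_meas (h : IsGenerator ψ) : Measurable (Lc ψ) :=
  pI_meas.comp (Measurable.const_sub (Phi_meas h) (ψ 0))

lemma Lc_eq (hz : z ∈ Icc (0:ℝ) 1) : Lc ψ z = levelFn ψ 0 z := by
  rw [Lc, Phi_eq hz]; rfl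

noncomputable def Cc (ψ : ℝ → ℝ≥0∞) : ℝ × ℝ → ℝ :=
  fun p => pseudoInv ψ (Phi ψ p.2 + Phi ψ p.1)

lemma Cc_meas (h : IsGenerator ψ) : Measurable (Cc ψ) :=
  pI_meas.comp (((Phi_meas h).comp measurable_snd).add ((Phi_meas h).comp measurable_fst))

lemma Cc_eq {p : ℝ × ℝ} (h1 : p.1 ∈ Icc (0:ℝ) 1) (h2 : p.2 ∈ Icc (0:ℝ) 1) :
    Cc ψ p = archCopula ψ p.2 p.1 := by
  rw [Cc, Phi_eq h1, Phi_eq h2]; rfl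

noncomputable def DPE (ψ : ℝ → ℝ≥0∞) : ℝ → ℝ≥0∞ := fun z =>
  ⨆ q : ℚ, if z < (q:ℝ) ∧ (q:ℝ) ≤ 1 then
    ENNReal.ofReal (-((Fc ψ q - Fc ψ z) / ((q:ℝ) - z))) else 0

lemma DPE_meas (h : IsGenerator ψ) : Measurable (DPE ψ) := by
  refine Measurable.iSup (fun q => Measurable.ite ?_ ?_ measurable_const)
  · have : {z : ℝ | z < (q:ℝ) ∧ (q:ℝ) ≤ 1} = Iio (q:ℝ) ∩ {z : ℝ | (q:ℝ) ≤ 1} := rfl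
    rw [this]
    exact measurableSet_Iio.inter (MeasurableSet.const _)
  · exact ENNReal.measurable_ofReal.comp
      (((measurable_const.sub (Fc_meas h)).div
        (measurable_const.sub measurable_id)).neg)

lemma DPE_eq (h : IsGenerator ψ) (hz : z ∈ Ioo (0:ℝ) 1) :
    DPE ψ z = ENNReal.ofReal (-(Dplus ψ z)) := by
  apply le_antisymm
  · refine iSup_le (fun q => ?_)
    split_ifs with hq
    · have hqI : (q:ℝ) ∈ Icc (0:ℝ) 1 := ⟨by linarith [hz.1, hq.1], hq.2⟩
      rw [Fc_eq hqI, Fc_eq ⟨hz.1.le, hz.2.le⟩]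
      exact ENNReal.ofReal_le_ofReal
        (neg_le_neg (Dplus_le_slope h hz ⟨hq.1, hq.2⟩))
    · exact zero_le
  · refine ENNReal.le_of_forall_pos_le_add (fun ε hε _ => ?_)
    have hεR : (0:ℝ) < (ε:ℝ) := hε
    have hlt : Dplus ψ z < Dplus ψ z + (ε:ℝ) := by linarith
    rw [Dplus_eq] at hlt
    obtain ⟨sl, hslmem, hslt⟩ :=
      exists_lt_of_csInf_lt (image_nonempty hz.2) hlt
    obtain ⟨t, ht, rfl⟩ := hslmem
    obtain ⟨q, hq1, hq2⟩ := exists_rat_btwn ht.1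
    have hqI : (q:ℝ) ∈ Ioc (0:ℝ) 1 := ⟨by linarith [hz.1], by linarith [ht.2]⟩
    have hqmem : (q:ℝ) ∈ Ioc (0:ℝ) 1 \ {z} := ⟨hqI, by simp; linarith⟩
    have htmem : t ∈ Ioc (0:ℝ) 1 \ {z} := ⟨⟨lt_trans hz.1 ht.1, ht.2⟩, by simp; linarith [ht.1]⟩
    have hslope_le : (F ψ q - F ψ z) / ((q:ℝ) - z) ≤ (F ψ t - F ψ z) / (t - z) := by
      have := ((cvx h).slope_mono ⟨hz.1, hz.2.le⟩) hqmem htmem hq2.le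
      rwa [slope_def_field, slope_def_field] at this
    have hkey : -(Dplus ψ z) ≤ -((F ψ q - F ψ z) / ((q:ℝ) - z)) + (ε:ℝ) := by
      rw [Dplus_eq]
      have h1 : (F ψ q - F ψ z) / ((q:ℝ) - z) < sInf ((fun t => (F ψ t - F ψ z) / (t - z)) '' Ioc z 1) + (ε:ℝ) :=
        lt_of_le_of_lt hslope_le hslt
      linarith
    calc ENNReal.ofReal (-(Dplus ψ z))
        ≤ ENNReal.ofReal (-((F ψ q - F ψ z) / ((q:ℝ) - z)) + (ε:ℝ)) :=
          ENNReal.ofReal_le_ofReal hkey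
      _ ≤ ENNReal.ofReal (-((F ψ q - F ψ z) / ((q:ℝ) - z))) + ENNReal.ofReal (ε:ℝ) :=
          ENNReal.ofReal_add_le
      _ = ENNReal.ofReal (-((Fc ψ q - Fc ψ z) / ((q:ℝ) - z))) + (ε:ℝ≥0∞) := by
          rw [Fc_eq ⟨by linarith [hz.1], hqI.2⟩, Fc_eq ⟨hz.1.le, hz.2.le⟩,
            ENNReal.ofReal_coe_nnreal]
      _ ≤ DPE ψ z + (ε:ℝ≥0∞) := by
          refine add_le_add ?_ le_rfl
          refine le_trans (le_of_eq ?_) (le_iSup _ q)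
          rw [if_pos ⟨hq1, hqI.2⟩]

lemma discont_countable (h : IsGenerator ψ) :
    {z | z ∈ Ioo (0:ℝ) 1 ∧ ¬ContinuousAt (Dplus ψ) z}.Countable := by
  have main : ∀ k : ℕ,
      {z | z ∈ Ioo (1/((k:ℝ)+3)) (1 - 1/((k:ℝ)+3)) ∧ ¬ContinuousAt (Dplus ψ) z}.Countable := by
    intro k
    set a : ℝ := 1/((k:ℝ)+3) with hadef
    set b : ℝ := 1 - 1/((k:ℝ)+3) with hbdef
    have hk3 : (0:ℝ) < (k:ℝ) + 3 := by positivity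
    have ha0 : 0 < a := by positivity
    have ha3 : a ≤ 1/3 := by
      rw [hadef, div_le_div_iff₀ hk3 (by norm_num)]
      have : (0:ℝ) ≤ (k:ℝ) := Nat.cast_nonneg k
      linarith
    have hb1 : b < 1 := by rw [hbdef]; linarith
    have hab : a < b := by rw [hbdef, hadef]; linarith
    have hclamp : ∀ z : ℝ, min (max z a) b ∈ Icc a b := fun z =>
      ⟨le_min (le_max_right z a) hab.le, min_le_right _ _⟩
    set g : ℝ → ℝ := fun z => Dplus ψ (min (max z a) b) with hgdef
    have hgmono : Monotone g := by
      intro z1 z2 h12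
      have hm : min (max z1 a) b ≤ min (max z2 a) b :=
        min_le_min (max_le_max h12 le_rfl) le_rfl
      exact Dplus_mono h (lt_of_lt_of_le ha0 (hclamp z1).1) hm
        (lt_of_le_of_lt (hclamp z2).2 hb1)
    refine hgmono.countable_not_continuousAt.mono ?_
    rintro z ⟨hz1, hz2⟩
    simp only [mem_setOf_eq]
    intro hcont
    apply hz2
    refine hcont.congr ?_
    filter_upwards [Ioo_mem_nhds hz1.1 hz1.2] with w hw
    simp only [hgdef]
    rw [max_eq_left hw.1.le, min_eq_left hw.2.le]
  refine (Set.countable_iUnion main).mono ?_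
  rintro z ⟨hz1, hz2⟩
  obtain ⟨k, hk⟩ := exists_nat_gt (max (1/z) (1/(1-z)))
  have hz1' : 0 < 1 - z := by linarith [hz1.2]
  refine mem_iUnion.mpr ⟨k, ⟨⟨?_, ?_⟩, hz2⟩⟩
  · have h1 : 1/z < (k:ℝ)+3 := by
      have := le_max_left (1/z) (1/(1-z)); linarith
    rw [div_lt_iff₀ hz1.1] at h1
    rw [div_lt_iff₀ (by positivity : (0:ℝ) < (k:ℝ)+3)]
    nlinarith
  · have h1 : 1/(1-z) < (k:ℝ)+3 := by
      have := le_max_right (1/z) (1/(1-z)); linarith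
    rw [div_lt_iff₀ hz1'] at h1
    have h2 : 1/((k:ℝ)+3) < 1 - z := by
      rw [div_lt_iff₀ (by positivity : (0:ℝ) < (k:ℝ)+3)]
      nlinarith
    linarith

end AG
namespace AG

variable {ψ φ : ℝ → ℝ≥0∞} {φseq : ℕ → ℝ → ℝ≥0∞}

local notation "μ1" => MeasureTheory.Measure.restrict volume (Icc (0:ℝ) 1)
local notation "μ2" => MeasureTheory.Measure.prod
  (MeasureTheory.Measure.restrict volume (Icc (0:ℝ) 1))
  (MeasureTheory.Measure.restrict volume (Icc (0:ℝ) 1))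

instance m1_finite : IsFiniteMeasure μ1 := by
  constructor
  rw [Measure.restrict_apply_univ]
  simp [Real.volume_Icc]

noncomputable def Kc (ψ : ℝ → ℝ≥0∞) : ℝ × ℝ → ℝ := fun p =>
  if p.1 < Lc ψ p.2 then 0 else (DPE ψ p.2).toReal / (DPE ψ (Cc ψ p)).toReal

lemma Kc_meas (h : IsGenerator ψ) : Measurable (Kc ψ) := by
  refine Measurable.ite ?_ measurable_const ?_
  · exact measurableSet_lt measurable_fst ((Lc_meas h).comp measurable_snd)
  · exact (ENNReal.measurable_toReal.comp ((DPE_meas h).comp measurable_snd)).div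
      (ENNReal.measurable_toReal.comp ((DPE_meas h).comp (Cc_meas h)))

lemma Kc_eq (h : IsGenerator ψ) {p : ℝ × ℝ} (h2 : p.2 ∈ Ioo (0:ℝ) 1)
    (h1 : p.1 ∈ Ioo (0:ℝ) 1) (hne : p.1 ≠ levelFn ψ 0 p.2) :
    Kc ψ p = archKernel ψ p.2 p.1 := by
  have hx01 : ¬(p.2 = 0 ∨ p.2 = 1) := by
    rintro (h' | h')
    · exact absurd h' h2.1.ne'
    · exact absurd h' h2.2.ne
  have hL : Lc ψ p.2 = levelFn ψ 0 p.2 := Lc_eq ⟨h2.1.le, h2.2.le⟩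
  rw [Kc, archKernel, if_neg hx01, hL]
  rcases hne.lt_or_gt with hlt | hgt
  · rw [if_pos hlt, if_pos hlt]
  · rw [if_neg (not_lt.mpr hgt.le), if_neg (not_lt.mpr hgt.le)]
    have hs_lt : ψ p.2 + ψ p.1 < ψ 0 := guard_of_lt h h2 h1 hgt
    have hCeq : Cc ψ p = archCopula ψ p.2 p.1 := Cc_eq ⟨h1.1.le, h1.2.le⟩ ⟨h2.1.le, h2.2.le⟩
    have hc0 : 0 < archCopula ψ p.2 p.1 := pI_pos h hs_lt
    have hcI : archCopula ψ p.2 p.1 ∈ Ioo (0:ℝ) 1 :=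
      ⟨hc0, lt_of_le_of_lt (archCopula_le h ⟨h2.1.le, h2.2.le⟩ _) h2.2⟩
    rw [hCeq, DPE_eq h h2, DPE_eq h hcI,
      ENNReal.toReal_ofReal (by linarith [Dplus_neg h h2]),
      ENNReal.toReal_ofReal (by linarith [Dplus_neg h hcI]),
      neg_div_neg_eq]

lemma restrict_null {N : Set ℝ} (h0 : volume N = 0) : μ1 N = 0 :=
  le_antisymm (le_trans (Measure.restrict_le_self N) (le_of_eq h0)) zero_le

lemma null_fst {N : Set ℝ} (hN : MeasurableSet N) (h0 : volume N = 0) :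
    μ2 {p : ℝ × ℝ | p.1 ∈ N} = 0 := by
  have he : {p : ℝ × ℝ | p.1 ∈ N} = N ×ˢ (univ : Set ℝ) := by
    ext p; simp [Set.mem_prod]
  rw [he, Measure.prod_prod, restrict_null h0, zero_mul]

lemma null_snd {N : Set ℝ} (hN : MeasurableSet N) (h0 : volume N = 0) :
    μ2 {p : ℝ × ℝ | p.2 ∈ N} = 0 := by
  have he : {p : ℝ × ℝ | p.2 ∈ N} = (univ : Set ℝ) ×ˢ N := by
    ext p; simp [Set.mem_prod]
  rw [he, Measure.prod_prod, restrict_null h0, mul_zero]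

lemma null_graph (h : IsGenerator ψ) : μ2 {p : ℝ × ℝ | p.1 = Lc ψ p.2} = 0 := by
  have hms : MeasurableSet {p : ℝ × ℝ | p.1 = Lc ψ p.2} :=
    measurableSet_eq_fun measurable_fst ((Lc_meas h).comp measurable_snd)
  rw [Measure.prod_apply_symm hms]
  have hsec : ∀ x : ℝ, μ1 ((fun y => (y, x)) ⁻¹' {p : ℝ × ℝ | p.1 = Lc ψ p.2}) = 0 := by
    intro x
    have hsub : (fun y => (y, x)) ⁻¹' {p : ℝ × ℝ | p.1 = Lc ψ p.2} = {Lc ψ x} := by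
      ext y; simp
    rw [hsub]
    exact measure_singleton _
  simp only [hsec]
  simp

/-- The set of discontinuity points of `D⁺ψ` in `(0,1)`. -/
def Ebad (ψ : ℝ → ℝ≥0∞) : Set ℝ := {z | z ∈ Ioo (0:ℝ) 1 ∧ ¬ContinuousAt (Dplus ψ) z}

lemma null_Ebad (h : IsGenerator ψ) : volume (Ebad ψ) = 0 :=
  (discont_countable h).measure_zero _

/-- The bad set where the copula hits a discontinuity point of `D⁺φ`. -/
def Nd (φ : ℝ → ℝ≥0∞) : Set (ℝ × ℝ) :=
  {p : ℝ × ℝ | p.2 ∈ Ioo (0:ℝ) 1 ∧ Lc φ p.2 < p.1 ∧ p.1 ∈ Ioo (0:ℝ) 1 ∧ Cc φ p ∈ Ebad φ}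

lemma null_Nd (h : IsGenerator φ) : μ2 (Nd φ) = 0 := by
  have hEm : MeasurableSet (Ebad φ) := (discont_countable h).measurableSet
  have hms : MeasurableSet (Nd φ) := by
    refine MeasurableSet.inter (measurable_snd measurableSet_Ioo) ?_
    refine MeasurableSet.inter (measurableSet_lt ((Lc_meas h).comp measurable_snd)
      measurable_fst) ?_
    exact MeasurableSet.inter (measurable_fst measurableSet_Ioo) ((Cc_meas h) hEm)
  rw [Measure.prod_apply_symm hms]
  have hsec : ∀ x : ℝ, μ1 ((fun y => (y, x)) ⁻¹' (Nd φ)) = 0 := by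
    intro x
    by_cases hx : x ∈ Ioo (0:ℝ) 1
    · set I : Set ℝ := Ioo (levelFn φ 0 x) 1 with hIdef
      set g : ℝ → ℝ := fun y => archCopula φ x y with hgdef
      have hginj : Set.InjOn g I := by
        refine StrictMonoOn.injOn (fun y1 hy1 y2 hy2 h12 => ?_)
        exact copula_strictMono_y h hx hy1.1 h12 hy2.2.le
      have hsub : (fun y => (y, x)) ⁻¹' (Nd φ) ⊆ I ∩ g ⁻¹' (Ebad φ) := by
        intro y hy
        simp only [Nd, mem_preimage, mem_setOf_eq] at hy
        obtain ⟨_, hL, hyI, hC⟩ := hy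
        have hLe : Lc φ x = levelFn φ 0 x := Lc_eq ⟨hx.1.le, hx.2.le⟩
        have hCe : Cc φ (y, x) = archCopula φ x y :=
          Cc_eq (p := (y, x)) ⟨hyI.1.le, hyI.2.le⟩ ⟨hx.1.le, hx.2.le⟩
        refine ⟨⟨by rwa [hLe] at hL, hyI.2⟩, ?_⟩
        simp only [mem_preimage, hgdef]
        rwa [hCe] at hC
      have hcnt : (I ∩ g ⁻¹' (Ebad φ)).Countable := by
        have h1 : Set.InjOn g (I ∩ g ⁻¹' (Ebad φ)) := hginj.mono inter_subset_left
        have h2 : (g '' (I ∩ g ⁻¹' (Ebad φ))).Countable :=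
          (discont_countable h).mono (by rintro _ ⟨w, hw, rfl⟩; exact hw.2)
        exact Set.countable_of_injective_of_countable_image h1 h2
      exact measure_mono_null hsub (hcnt.measure_zero _)
    · have : (fun y => (y, x)) ⁻¹' (Nd φ) = ∅ := by
        ext y
        simp only [Nd, mem_preimage, mem_setOf_eq, mem_empty_iff_false, iff_false]
        intro hcon
        exact hx hcon.1
      rw [this]
      exact measure_empty
  simp only [hsec]
  simp

lemma ae_basic (h : IsGenerator ψ) :
    ∀ᵐ p ∂μ2, p.2 ∈ Ioo (0:ℝ) 1 ∧ p.1 ∈ Ioo (0:ℝ) 1 ∧ p.1 ≠ levelFn ψ 0 p.2 := by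
  have hIcc : ∀ᵐ p ∂μ2, p ∈ (Icc (0:ℝ) 1) ×ˢ (Icc (0:ℝ) 1) := by
    rw [Measure.prod_restrict]
    exact ae_restrict_mem (measurableSet_Icc.prod measurableSet_Icc)
  have h01 : volume ({0, 1} : Set ℝ) = 0 :=
    ((countable_singleton (1:ℝ)).insert 0).measure_zero _
  have h01m : MeasurableSet ({0, 1} : Set ℝ) :=
    ((countable_singleton (1:ℝ)).insert 0).measurableSet
  have e1 : ∀ᵐ p ∂μ2, ¬ (p.1 ∈ ({0, 1} : Set ℝ)) :=
    (measure_eq_zero_iff_ae_notMem).mp (null_fst h01m h01)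
  have e2 : ∀ᵐ p ∂μ2, ¬ (p.2 ∈ ({0, 1} : Set ℝ)) :=
    (measure_eq_zero_iff_ae_notMem).mp (null_snd h01m h01)
  have e3 : ∀ᵐ p ∂μ2, ¬ (p ∈ {p : ℝ × ℝ | p.1 = Lc ψ p.2}) :=
    (measure_eq_zero_iff_ae_notMem).mp (null_graph h)
  filter_upwards [hIcc, e1, e2, e3] with p hp h1 h2 h3
  simp only [mem_insert_iff, mem_singleton_iff, not_or] at h1 h2
  have hp2 : p.2 ∈ Ioo (0:ℝ) 1 :=
    ⟨lt_of_le_of_ne hp.2.1 (Ne.symm h2.1), lt_of_le_of_ne hp.2.2 h2.2⟩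
  have hp1 : p.1 ∈ Ioo (0:ℝ) 1 :=
    ⟨lt_of_le_of_ne hp.1.1 (Ne.symm h1.1), lt_of_le_of_ne hp.1.2 h1.2⟩
  refine ⟨hp2, hp1, ?_⟩
  rw [← Lc_eq ⟨hp2.1.le, hp2.2.le⟩]
  exact h3

lemma archKernel_aesm (h : IsGenerator ψ) :
    AEStronglyMeasurable (fun p : ℝ × ℝ => archKernel ψ p.2 p.1) μ2 := by
  refine (Kc_meas h).aestronglyMeasurable.congr ?_
  filter_upwards [ae_basic h] with p hp
  exact Kc_eq h hp.1 hp.2.1 hp.2.2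

lemma ae_tendsto (hφ : IsGenerator φ) (hφseq : ∀ n, IsGenerator (φseq n))
    (hconv : ∀ x ∈ Ioc (0:ℝ) 1, Tendsto (fun n => φseq n x) atTop (nhds (φ x))) :
    ∀ᵐ p ∂μ2, Tendsto (fun n => archKernel (φseq n) p.2 p.1) atTop
      (nhds (archKernel φ p.2 p.1)) := by
  have e4 : ∀ᵐ p ∂μ2, ¬ (p.2 ∈ Ebad φ) :=
    (measure_eq_zero_iff_ae_notMem).mp (null_snd (discont_countable hφ).measurableSet
      (null_Ebad hφ))
  have e5 : ∀ᵐ p ∂μ2, ¬ (p ∈ Nd φ) := (measure_eq_zero_iff_ae_notMem).mp (null_Nd hφ)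
  filter_upwards [ae_basic hφ, e4, e5] with p hp h4 h5
  obtain ⟨hp2, hp1, hne⟩ := hp
  have hcx : ContinuousAt (Dplus φ) p.2 := by
    by_contra hcon
    exact h4 ⟨hp2, hcon⟩
  refine kernel_conv hφ hφseq hconv hp2 hp1 hcx hne ?_
  intro hgt
  by_contra hcon
  apply h5
  have hs_lt : φ p.2 + φ p.1 < φ 0 := guard_of_lt hφ hp2 hp1 hgt
  have hc0 : 0 < archCopula φ p.2 p.1 := pI_pos hφ hs_lt
  have hcI : archCopula φ p.2 p.1 ∈ Ioo (0:ℝ) 1 :=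
    ⟨hc0, lt_of_le_of_lt (archCopula_le hφ ⟨hp2.1.le, hp2.2.le⟩ _) hp2.2⟩
  have hCe : Cc φ p = archCopula φ p.2 p.1 :=
    Cc_eq ⟨hp1.1.le, hp1.2.le⟩ ⟨hp2.1.le, hp2.2.le⟩
  refine ⟨hp2, ?_, hp1, ?_⟩
  · rw [Lc_eq ⟨hp2.1.le, hp2.2.le⟩]
    exact hgt
  · rw [hCe]
    exact ⟨hcI, hcon⟩

end AG
namespace AG

variable {ψ φ : ℝ → ℝ≥0∞} {φseq : ℕ → ℝ → ℝ≥0∞}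

local notation "μ1" => MeasureTheory.Measure.restrict volume (Icc (0:ℝ) 1)
local notation "μ2" => MeasureTheory.Measure.prod
  (MeasureTheory.Measure.restrict volume (Icc (0:ℝ) 1))
  (MeasureTheory.Measure.restrict volume (Icc (0:ℝ) 1))

lemma ae_mem_Icc2 : ∀ᵐ p : ℝ × ℝ ∂μ2, p.1 ∈ Icc (0:ℝ) 1 ∧ p.2 ∈ Icc (0:ℝ) 1 := by
  have hIcc : ∀ᵐ p : ℝ × ℝ ∂μ2, p ∈ (Icc (0:ℝ) 1) ×ˢ (Icc (0:ℝ) 1) := by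
    rw [Measure.prod_restrict]
    exact ae_restrict_mem (measurableSet_Icc.prod measurableSet_Icc)
  filter_upwards [hIcc] with p hp
  exact ⟨hp.1, hp.2⟩

lemma abs_bound (h : IsGenerator ψ) :
    ∀ᵐ p : ℝ × ℝ ∂μ2, ‖|archKernel ψ p.2 p.1 - p.1|‖ ≤ (2:ℝ) := by
  filter_upwards [ae_mem_Icc2] with p hp
  have h1 := archKernel_mem h hp.2 p.1
  rw [Real.norm_eq_abs, abs_abs, abs_le]
  constructor <;> [linarith [h1.1, hp.1.2]; linarith [h1.2, hp.1.1]]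

lemma sq_bound (h : IsGenerator ψ) :
    ∀ᵐ p : ℝ × ℝ ∂μ2, ‖(archKernel ψ p.2 p.1) ^ 2‖ ≤ (1:ℝ) := by
  filter_upwards [ae_mem_Icc2] with p hp
  have h1 := archKernel_mem h hp.2 p.1
  rw [Real.norm_eq_abs, abs_le]
  constructor <;> nlinarith [h1.1, h1.2]

lemma abs_aesm (h : IsGenerator ψ) :
    AEStronglyMeasurable (fun p : ℝ × ℝ => |archKernel ψ p.2 p.1 - p.1|) μ2 :=
  continuous_abs.comp_aestronglyMeasurable
    ((archKernel_aesm h).sub measurable_fst.aestronglyMeasurable)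

lemma sq_aesm (h : IsGenerator ψ) :
    AEStronglyMeasurable (fun p : ℝ × ℝ => (archKernel ψ p.2 p.1) ^ 2) μ2 :=
  (continuous_pow 2).comp_aestronglyMeasurable (archKernel_aesm h)

lemma D1_eq (h : IsGenerator ψ) :
    D1 (archKernel ψ) piKernel = ∫ p, |archKernel ψ p.2 p.1 - p.1| ∂μ2 := by
  have hInt : Integrable (Function.uncurry fun y x => |archKernel ψ x y - y|) μ2 := by
    refine Integrable.mono' (integrable_const 2) ?_ ?_
    · exact abs_aesm h
    · exact abs_bound h
  exact MeasureTheory.integral_integral hInt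

lemma sq_eq (h : IsGenerator ψ) :
    (∫ y in Icc (0:ℝ) 1, ∫ x in Icc (0:ℝ) 1, (archKernel ψ x y) ^ 2)
      = ∫ p, (archKernel ψ p.2 p.1) ^ 2 ∂μ2 := by
  have hInt : Integrable (Function.uncurry fun y x => (archKernel ψ x y) ^ 2) μ2 := by
    refine Integrable.mono' (integrable_const 1) ?_ ?_
    · exact sq_aesm h
    · exact sq_bound h
  exact MeasureTheory.integral_integral hInt

lemma tendsto_int_abs (hφ : IsGenerator φ) (hφseq : ∀ n, IsGenerator (φseq n))
    (hconv : ∀ x ∈ Ioc (0:ℝ) 1, Tendsto (fun n => φseq n x) atTop (nhds (φ x))) :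
    Tendsto (fun n => ∫ p, |archKernel (φseq n) p.2 p.1 - p.1| ∂μ2) atTop
      (nhds (∫ p, |archKernel φ p.2 p.1 - p.1| ∂μ2)) := by
  refine tendsto_integral_of_dominated_convergence (fun _ => 2)
    (fun n => abs_aesm (hφseq n)) (integrable_const 2) (fun n => abs_bound (hφseq n)) ?_
  filter_upwards [ae_tendsto hφ hφseq hconv] with p hp
  exact (hp.sub tendsto_const_nhds).abs

lemma tendsto_int_sq (hφ : IsGenerator φ) (hφseq : ∀ n, IsGenerator (φseq n))
    (hconv : ∀ x ∈ Ioc (0:ℝ) 1, Tendsto (fun n => φseq n x) atTop (nhds (φ x))) :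
    Tendsto (fun n => ∫ p, (archKernel (φseq n) p.2 p.1) ^ 2 ∂μ2) atTop
      (nhds (∫ p, (archKernel φ p.2 p.1) ^ 2 ∂μ2)) := by
  refine tendsto_integral_of_dominated_convergence (fun _ => 1)
    (fun n => sq_aesm (hφseq n)) (integrable_const 1) (fun n => sq_bound (hφseq n)) ?_
  filter_upwards [ae_tendsto hφ hφseq hconv] with p hp
  exact hp.pow 2

end AG
/-- For Archimedean copulas whose generators converge pointwise on
`(0,1]`, the dependence measures `ζ₁` and `r` of the copulas converge:
`ζ₁(C_n) → ζ₁(C)` and `r(C_n) → r(C)`. -/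
theorem stmt13 (φ : ℝ → ℝ≥0∞) (φseq : ℕ → ℝ → ℝ≥0∞)
    (hφ : IsGenerator φ) (hφseq : ∀ n, IsGenerator (φseq n))
    (hconv : ∀ x ∈ Set.Ioc (0:ℝ) 1,
      Filter.Tendsto (fun n => φseq n x) Filter.atTop (nhds (φ x))) :
    Filter.Tendsto (fun n => zeta1 (archKernel (φseq n))) Filter.atTop
        (nhds (zeta1 (archKernel φ))) ∧
      Filter.Tendsto (fun n => rdep (archKernel (φseq n))) Filter.atTop
        (nhds (rdep (archKernel φ))) := by
  constructor
  · have h1 := (AG.tendsto_int_abs hφ hφseq hconv).const_mul 3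
    simp only [zeta1]
    rw [AG.D1_eq hφ]
    refine Filter.Tendsto.congr (fun n => ?_) h1
    rw [AG.D1_eq (hφseq n)]
  · have h1 := ((AG.tendsto_int_sq hφ hφseq hconv).const_mul 6).sub_const 2
    simp only [rdep]
    rw [AG.sq_eq hφ]
    refine Filter.Tendsto.congr (fun n => ?_) h1
    rw [AG.sq_eq (hφseq n)]
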